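/- arXiv:2603.21506 — 3 statements merged into one kernel-verified Lean document; each statement's English description precedes it below -/
import Mathlib

section
/- Let R_0 be an order in an étale Q-algebra and let f ≥ 1 be an integer. The map sending an overorder R ⊇ R_0 with [R : R_0] = f to the R_0-submodule I := fR establishes a bijection between {overorders R of R_0 of index f} and {R_0-submodules I with fR_0 ⊆ I ⊆ R_0, I² ⊆ fI, and [I : fR_0] = f}; the inverse sends I to R = {x ∈ (1/f)R_0 : fx ∈ I}. -/
/-- Let `R₀` be an order in an étale `ℚ`-algebra `E` and `f ≥ 1`. The map `R ↦ I := f·R`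
is a bijection between the overorders `R ⊇ R₀` of index `f` and the `R₀`-submodules `I`
with `fR₀ ⊆ I ⊆ R₀`, `I² ⊆ fI` and `[I : fR₀] = f`; the inverse sends `I` to
`R = {x ∈ (1/f)R₀ : fx ∈ I}`. -/
theorem stmt2 (E : Type) [CommRing E] [Algebra ℚ E] [Module.Finite ℚ E]
    [Algebra.FormallyEtale ℚ E]
    (R₀ : Subring E) (hfull : Submodule.span ℚ (R₀ : Set E) = ⊤)
    (hfg : R₀.toAddSubgroup.FG)
    (f : ℕ) (hf : 1 ≤ f) :
    ∃ e : {R : Subring E // R₀ ≤ R ∧ R₀.toAddSubgroup.relIndex R.toAddSubgroup = f} ≃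
        {I : AddSubgroup E //
          (∀ r ∈ R₀, ∀ x ∈ I, r * x ∈ I) ∧
          AddSubgroup.map (AddMonoidHom.mulLeft (f : E)) R₀.toAddSubgroup ≤ I ∧
          I ≤ R₀.toAddSubgroup ∧
          (∀ x ∈ I, ∀ y ∈ I, x * y ∈ AddSubgroup.map (AddMonoidHom.mulLeft (f : E)) I) ∧
          (AddSubgroup.map (AddMonoidHom.mulLeft (f : E)) R₀.toAddSubgroup).relIndex I = f},
      (∀ R, ((e R : AddSubgroup E)) =
          AddSubgroup.map (AddMonoidHom.mulLeft (f : E)) (R : Subring E).toAddSubgroup) ∧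
      (∀ I, ∀ x : E, x ∈ (e.symm I : Subring E) ↔ (f : E) * x ∈ (I : AddSubgroup E)) := by
  classical
  set ψ : E →+ E := AddMonoidHom.mulLeft (f : E) with hψ
  have hq : (f : ℚ) ≠ 0 := by positivity
  have hmul : ∀ x : E, (f : E) * x = (f : ℚ) • x := by
    intro x
    rw [Algebra.smul_def, map_natCast]
  have hinj : Function.Injective ψ := by
    intro a b hab
    have : (f : ℚ) • a = (f : ℚ) • b := by
      rw [← hmul, ← hmul]; exact hab
    exact smul_right_injective E hq this
  have hsurj : Function.Surjective ψ := by
    intro y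
    refine ⟨(f : ℚ)⁻¹ • y, ?_⟩
    show (f : E) * ((f : ℚ)⁻¹ • y) = y
    rw [hmul, smul_smul, mul_inv_cancel₀ hq, one_smul]
  have hrel : ∀ A B : AddSubgroup E,
      (A.map ψ).relIndex (B.map ψ) = A.relIndex B := by
    intro A B
    rw [← AddSubgroup.relIndex_comap, AddSubgroup.comap_map_eq_self_of_injective hinj]
  have key : ∀ (H K : AddSubgroup E), H.relIndex K = f → ∀ x ∈ K, (f : E) * x ∈ H := by
    intro H K hHK x hx
    have h1 : Nat.card (K ⧸ H.addSubgroupOf K) = f := by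
      rw [← AddSubgroup.index_eq_card]; exact hHK
    have h2 : f • (QuotientAddGroup.mk (⟨x, hx⟩ : K) : K ⧸ H.addSubgroupOf K) = 0 := by
      rw [← h1]; exact card_nsmul_eq_zero'
    rw [← QuotientAddGroup.mk_nsmul, QuotientAddGroup.eq_zero_iff,
      AddSubgroup.mem_addSubgroupOf] at h2
    simpa [nsmul_eq_mul] using h2
  -- forward map property
  have fwd : ∀ R : Subring E, R₀ ≤ R → R₀.toAddSubgroup.relIndex R.toAddSubgroup = f →
      (∀ r ∈ R₀, ∀ x ∈ R.toAddSubgroup.map ψ, r * x ∈ R.toAddSubgroup.map ψ) ∧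
      R₀.toAddSubgroup.map ψ ≤ R.toAddSubgroup.map ψ ∧
      R.toAddSubgroup.map ψ ≤ R₀.toAddSubgroup ∧
      (∀ x ∈ R.toAddSubgroup.map ψ, ∀ y ∈ R.toAddSubgroup.map ψ,
        x * y ∈ (R.toAddSubgroup.map ψ).map ψ) ∧
      (R₀.toAddSubgroup.map ψ).relIndex (R.toAddSubgroup.map ψ) = f := by
    intro R hR₀ hRf
    refine ⟨?_, AddSubgroup.map_mono ?_, ?_, ?_, ?_⟩
    · rintro r hr x ⟨y, hy, rfl⟩
      exact ⟨r * y, R.mul_mem (hR₀ hr) hy, by show (f:E) * (r*y) = r * ((f:E)*y); ring⟩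
    · exact fun x hx => hR₀ hx
    · rintro x ⟨y, hy, rfl⟩
      exact key _ _ hRf y hy
    · rintro x ⟨a, ha, rfl⟩ y ⟨b, hb, rfl⟩
      exact ⟨(f : E) * (a * b), ⟨a * b, R.mul_mem ha hb, rfl⟩,
        by show (f:E) * ((f:E)*(a*b)) = ((f:E)*a) * ((f:E)*b); ring⟩
    · rw [hrel]; exact hRf
  -- backward construction
  let Bwd : {I : AddSubgroup E //
        (∀ r ∈ R₀, ∀ x ∈ I, r * x ∈ I) ∧
        AddSubgroup.map ψ R₀.toAddSubgroup ≤ I ∧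
        I ≤ R₀.toAddSubgroup ∧
        (∀ x ∈ I, ∀ y ∈ I, x * y ∈ AddSubgroup.map ψ I) ∧
        (AddSubgroup.map ψ R₀.toAddSubgroup).relIndex I = f} →
      {R : Subring E // R₀ ≤ R ∧ R₀.toAddSubgroup.relIndex R.toAddSubgroup = f} :=
    fun I =>
      let S : Subring E :=
        { carrier := {x : E | (f : E) * x ∈ (I : AddSubgroup E)}
          zero_mem' := by simpa using (I : AddSubgroup E).zero_mem
          one_mem' := by
            show (f : E) * 1 ∈ (I : AddSubgroup E)
            exact I.2.2.1 ⟨1, R₀.one_mem, by simp [hψ]⟩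
          add_mem' := by
            intro a b ha hb
            show (f : E) * (a + b) ∈ (I : AddSubgroup E)
            rw [mul_add]
            exact (I : AddSubgroup E).add_mem ha hb
          neg_mem' := by
            intro a ha
            show (f : E) * (-a) ∈ (I : AddSubgroup E)
            rw [mul_neg]
            exact (I : AddSubgroup E).neg_mem ha
          mul_mem' := by
            intro a b ha hb
            show (f : E) * (a * b) ∈ (I : AddSubgroup E)
            obtain ⟨z, hz, hez⟩ := I.2.2.2.2.1 _ ha _ hb
            have h3 : ψ z = ψ ((f : E) * (a * b)) := by
              rw [hez]
              show (f:E) * a * ((f:E) * b) = (f:E) * ((f:E) * (a*b))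
              ring
            rwa [← hinj h3] }
      have hS : S.toAddSubgroup = (I : AddSubgroup E).comap ψ := by
        ext x; exact Iff.rfl
      ⟨S, fun r hr => I.2.2.1 ⟨r, hr, rfl⟩, by
        rw [← hrel, hS, AddSubgroup.map_comap_eq_self_of_surjective hsurj]
        exact I.2.2.2.2.2⟩
  refine ⟨⟨fun R => ⟨(R : Subring E).toAddSubgroup.map ψ, fwd R.1 R.2.1 R.2.2⟩, Bwd,
    ?_, ?_⟩, fun R => rfl, fun I x => Iff.rfl⟩
  · rintro ⟨R, hR⟩
    refine Subtype.ext (SetLike.ext fun x => ?_)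
    constructor
    · rintro ⟨y, hy, he⟩
      rwa [← hinj he]
    · intro hx
      exact ⟨x, hx, rfl⟩
  · rintro ⟨I, hI⟩
    refine Subtype.ext ?_
    show AddSubgroup.map ψ _ = I
    rw [show (Bwd ⟨I, hI⟩ : Subring E).toAddSubgroup = I.comap ψ from rfl,
      AddSubgroup.map_comap_eq_self_of_surjective hsurj]
end

section
/- Let p be a prime, p ∤ 6, and q an integer with p ∤ q. Fix integers r ≥ 1 and β ≥ 0 with 3β < r. The number of solutions (u, a, b) with u ∈ (Z/p^{r-2β}Z)^× and (a, b) ∈ (Z/p^{2r}Z)² to the system {a + 3u ≡ 0 mod p^β, 3u² + 2au + b ≡ 0 mod p^{r-β}, u³ + au² + bu + q ≡ 0 mod p^{2r-3β}} equals (p-1)p^{2r-1} if β = 0, and n_p(q)·p^{2r+β} if β ≥ 1, where n_p(q) = #{r ∈ F_p : r³ ≡ -q mod p}. -/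
open Finset

section Helpers

variable {m n : ℕ}

lemma card_fiber [NeZero n] (h : m ∣ n) (v : ZMod m) :
    Nat.card {x : ZMod n // ZMod.castHom h (ZMod m) x = v} = n / m := by
  haveI : NeZero m := ⟨fun h0 => (NeZero.ne n) (by subst h0; exact eq_zero_of_zero_dvd h)⟩
  classical
  set f := ZMod.castHom h (ZMod m) with hf
  have key : ∀ w : ZMod m, Nat.card {x : ZMod n // f x = w} =
      Nat.card {x : ZMod n // f x = 0} := by
    intro w
    have hx0 : f ((w.val : ZMod n)) = w := by
      simp [hf, ZMod.natCast_val, ZMod.cast_id]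
    exact Nat.card_congr
      ⟨fun x => ⟨x.1 - (w.val : ZMod n), by rw [map_sub, x.2, hx0, sub_self]⟩,
       fun y => ⟨y.1 + (w.val : ZMod n), by rw [map_add, y.2, hx0, zero_add]⟩,
       fun x => by simp, fun y => by simp⟩
  have h1 : Nat.card (ZMod n) = ∑ w : ZMod m, Nat.card {x : ZMod n // f x = w} := by
    rw [← Nat.card_congr (Equiv.sigmaFiberEquiv f), Nat.card_eq_fintype_card,
      Fintype.card_sigma]
    simp [Nat.card_eq_fintype_card]
  have total : n = m * Nat.card {x : ZMod n // f x = 0} := by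
    calc n = Nat.card (ZMod n) := (Nat.card_zmod n).symm
      _ = ∑ w : ZMod m, Nat.card {x : ZMod n // f x = w} := h1
      _ = ∑ _w : ZMod m, Nat.card {x : ZMod n // f x = 0} := by simp only [key]
      _ = m * Nat.card {x : ZMod n // f x = 0} := by
          rw [Finset.sum_const, Finset.card_univ, ZMod.card, smul_eq_mul]
  rw [key v]
  exact (Nat.div_eq_of_eq_mul_right (Nat.pos_of_ne_zero (NeZero.ne m)) total).symm

lemma card_fiber_unit [NeZero n] (h : m ∣ n) {w : ZMod m} (hw : IsUnit w) (c : ZMod m) :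
    Nat.card {x : ZMod n // w * ZMod.castHom h (ZMod m) x = c} = n / m := by
  obtain ⟨w, rfl⟩ := hw
  have e : ∀ x : ZMod n, (↑w * ZMod.castHom h (ZMod m) x = c ↔
      ZMod.castHom h (ZMod m) x = ↑w⁻¹ * c) := by
    intro x
    constructor
    · intro hx; rw [← hx, ← mul_assoc]; simp
    · intro hx; rw [hx, ← mul_assoc]; simp
  rw [Nat.card_congr (Equiv.subtypeEquivRight e)]
  exact card_fiber h _

lemma card_cond_prod {α β : Type*} [Fintype α] [Fintype β] (C : α → β → Prop) :
    Nat.card {x : α × β // C x.1 x.2} = ∑ a : α, Nat.card {b : β // C a b} := by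
  classical
  rw [Nat.card_congr (Equiv.subtypeProdEquivSigmaSubtype C), Nat.card_eq_fintype_card,
    Fintype.card_sigma]
  simp [Nat.card_eq_fintype_card]

lemma sum_ite_card {α : Type*} [Fintype α] (G : α → Prop) [DecidablePred G] (k : ℕ) :
    ∑ a : α, (if G a then k else 0) = Nat.card {a // G a} * k := by
  rw [Nat.card_eq_fintype_card, Fintype.card_subtype, ← Finset.sum_filter,
    Finset.sum_const, smul_eq_mul]

lemma card_nat_subtype (n : ℕ) (P : ℕ → Prop) [DecidablePred P] :
    Nat.card {x : ℕ // x < n ∧ P x} = ((range n).filter P).card := by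
  rw [← Nat.card_eq_finsetCard]
  exact Nat.card_congr (Equiv.subtypeEquivRight (by simp))

def natZModEquiv (n : ℕ) [NeZero n] (Q : ZMod n → Prop) :
    {x : ℕ // x < n ∧ Q (x : ZMod n)} ≃ {y : ZMod n // Q y} where
  toFun x := ⟨(x.1 : ZMod n), x.2.2⟩
  invFun y := ⟨y.1.val, ZMod.val_lt _, by rw [ZMod.natCast_rightInverse y.1]; exact y.2⟩
  left_inv x := Subtype.ext (by simp [ZMod.val_cast_of_lt x.2.1])
  right_inv y := Subtype.ext (by simp [ZMod.natCast_rightInverse y.1])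

lemma periodic_filter_card (d : ℕ) (P : ℕ → Prop) [DecidablePred P]
    (hP : ∀ x, P (x + d) ↔ P x) (k : ℕ) :
    ((range (k * d)).filter P).card = k * ((range d).filter P).card := by
  have hjump : ∀ j x, P (j * d + x) ↔ P x := by
    intro j
    induction j with
    | zero => simp
    | succ j ih =>
      intro x
      have : (j + 1) * d + x = (j * d + x) + d := by ring
      rw [this, hP, ih]
  classical
  induction k with
  | zero => simp
  | succ k ih =>
    have hdisj : Disjoint ((range (k * d)).filter P)
        (((range d).map (addLeftEmbedding (k * d))).filter P) := by
      rw [Finset.disjoint_left]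
      rintro x hx hx2
      simp only [mem_filter, mem_range] at hx
      simp only [mem_filter, mem_map, addLeftEmbedding_apply] at hx2
      obtain ⟨⟨y, _, rfl⟩, _⟩ := hx2
      omega
    rw [add_mul, one_mul, Finset.range_add, filter_union,
      card_union_of_disjoint hdisj, ih, Finset.filter_map, card_map]
    have heq : (range d).filter (P ∘ (addLeftEmbedding (k * d))) = (range d).filter P := by
      apply Finset.filter_congr
      intro x _
      simp [Function.comp, addLeftEmbedding_apply, hjump k x]
    rw [heq]
    ring

end Helpers

lemma card_cond_prod_eval {α β : Type*} [Fintype α] [Fintype β] (C : α → β → Prop)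
    (G : α → Prop) [DecidablePred G] (k : ℕ)
    (h : ∀ a, Nat.card {b : β // C a b} = if G a then k else 0) :
    Nat.card {x : α × β // C x.1 x.2} = Nat.card {a // G a} * k := by
  rw [card_cond_prod, Finset.sum_congr rfl (fun a _ => h a)]
  exact sum_ite_card G k

section Hensel

open scoped Classical

lemma not_dvd_of_root {p : ℕ} (hp : p.Prime) {q u : ℤ} (hq : ¬ (p : ℤ) ∣ q)
    (h : (p : ℤ) ∣ (u ^ 3 + q)) : ¬ (p : ℤ) ∣ u := by
  intro h2
  have h3 : (p : ℤ) ∣ u ^ 3 := dvd_pow h2 (by norm_num)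
  exact hq (by simpa using dvd_sub h h3)

lemma hensel_step (p : ℕ) (hp : p.Prime) (q : ℤ) (hq : ¬ (p : ℤ) ∣ q) (hp3 : ¬ (p : ℤ) ∣ 3)
    (k : ℕ) (hk : 1 ≤ k) :
    ((range (p ^ (k + 1))).filter (fun u : ℕ => (p : ℤ) ^ (k + 1) ∣ ((u : ℤ) ^ 3 + q))).card =
    ((range (p ^ k)).filter (fun u : ℕ => (p : ℤ) ^ k ∣ ((u : ℤ) ^ 3 + q))).card := by
  obtain ⟨j, rfl⟩ : ∃ j, k = j + 1 := ⟨k - 1, by omega⟩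
  have hpI : Prime (p : ℤ) := Nat.prime_iff_prime_int.mp hp
  have hppos : 0 < p ^ (j + 1) := pow_pos hp.pos _
  apply Finset.card_bij (fun u _ => u % p ^ (j + 1))
  · intro u hu
    simp only [mem_filter, mem_range] at hu ⊢
    refine ⟨Nat.mod_lt _ hppos, ?_⟩
    have base : ((u % p ^ (j + 1) : ℕ) : ℤ) = (u : ℤ) % ((p : ℤ) ^ (j + 1)) := by push_cast; ring
    have hmod : (u : ℤ) % ((p : ℤ) ^ (j + 1)) ≡ (u : ℤ) [ZMOD (p : ℤ) ^ (j + 1)] :=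
      Int.emod_emod_of_dvd _ dvd_rfl
    have hcong : ((u % p ^ (j + 1) : ℕ) : ℤ) ^ 3 + q ≡ (u : ℤ) ^ 3 + q [ZMOD (p : ℤ) ^ (j + 1)] := by
      rw [base]; exact (hmod.pow 3).add_right q
    have hdvd2 : ((p : ℤ) ^ (j + 1)) ∣ ((u : ℤ) ^ 3 + q) :=
      dvd_trans (pow_dvd_pow _ (by omega)) hu.2
    exact (Int.modEq_zero_iff_dvd).mp (hcong.trans ((Int.modEq_zero_iff_dvd).mpr hdvd2))
  · intro a ha b hb hab
    simp only [mem_filter, mem_range] at ha hb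
    have habz : (a : ℤ) ≡ (b : ℤ) [ZMOD (p : ℤ) ^ (j + 1)] := by
      have hca : ((a % p ^ (j + 1) : ℕ) : ℤ) = ((b % p ^ (j + 1) : ℕ) : ℤ) :=
        congrArg (fun x : ℕ => (x : ℤ)) hab
      unfold Int.ModEq
      push_cast at hca
      exact hca
    obtain ⟨t, ht⟩ := habz.dvd
    have hbeq : (b : ℤ) = a + (p : ℤ) ^ (j + 1) * t := by linarith
    have hcube : ((p : ℤ) ^ (j + 2)) ∣ ((b : ℤ) ^ 3 - (a : ℤ) ^ 3) := by
      have h0 := dvd_sub hb.2 ha.2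
      rw [show ((b : ℤ) ^ 3 + q) - ((a : ℤ) ^ 3 + q) = (b : ℤ) ^ 3 - (a : ℤ) ^ 3 by ring] at h0
      exact h0
    have expand : (b : ℤ) ^ 3 - (a : ℤ) ^ 3 =
        (p : ℤ) ^ (j + 1) * (3 * (a : ℤ) ^ 2 * t) +
        (p : ℤ) ^ (j + 2) * ((p : ℤ) ^ j * (3 * (a : ℤ) * t ^ 2) + (p : ℤ) ^ (2 * j + 1) * t ^ 3) := by
      rw [hbeq]; ring
    have h1 : ((p : ℤ) ^ (j + 2)) ∣ (p : ℤ) ^ (j + 1) * (3 * (a : ℤ) ^ 2 * t) := by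
      have hd2 : ((p : ℤ) ^ (j + 2)) ∣ (p : ℤ) ^ (j + 2) *
          ((p : ℤ) ^ j * (3 * (a : ℤ) * t ^ 2) + (p : ℤ) ^ (2 * j + 1) * t ^ 3) :=
        Dvd.intro _ rfl
      have h0 := dvd_sub hcube hd2
      rw [expand] at h0
      simpa using h0
    have hne : ((p : ℤ) ^ (j + 1)) ≠ 0 := pow_ne_zero _ (by exact_mod_cast hp.pos.ne')
    have h2 : (p : ℤ) ∣ 3 * (a : ℤ) ^ 2 * t := by
      rw [pow_succ] at h1
      exact (mul_dvd_mul_iff_left hne).mp h1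
    have hpa : ¬ (p : ℤ) ∣ (a : ℤ) :=
      not_dvd_of_root hp hq (dvd_trans (dvd_pow_self (p : ℤ) (by omega : j + 2 ≠ 0)) ha.2)
    have hpt : (p : ℤ) ∣ t := by
      rcases hpI.dvd_mul.mp h2 with h | h
      · rcases hpI.dvd_mul.mp h with h3 | h3
        · exact absurd h3 hp3
        · exact absurd (hpI.dvd_of_dvd_pow h3) hpa
      · exact h
    have hfin : ((p : ℤ) ^ (j + 2)) ∣ ((b : ℤ) - a) := by
      rw [ht, pow_succ]
      exact mul_dvd_mul (dvd_refl _) hpt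
    have habs : |(b : ℤ) - a| < (p : ℤ) ^ (j + 2) := by
      have hlta : (a : ℤ) < (p : ℤ) ^ (j + 2) := by exact_mod_cast ha.1
      have hltb : (b : ℤ) < (p : ℤ) ^ (j + 2) := by exact_mod_cast hb.1
      rw [abs_lt]
      constructor
      · linarith [Int.ofNat_nonneg a, Int.ofNat_nonneg b]
      · linarith [Int.ofNat_nonneg a, Int.ofNat_nonneg b]
    have hz : (b : ℤ) - a = 0 := Int.eq_zero_of_abs_lt_dvd hfin habs
    exact_mod_cast (by linarith : (a : ℤ) = b)
  · intro v hv
    simp only [mem_filter, mem_range] at hv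
    obtain ⟨s, hs⟩ := hv.2
    haveI : NeZero p := ⟨hp.pos.ne'⟩
    haveI : Fact p.Prime := ⟨hp⟩
    have hpv : ¬ (p : ℤ) ∣ (v : ℤ) :=
      not_dvd_of_root hp hq (dvd_trans (dvd_pow_self (p : ℤ) (by omega : j + 1 ≠ 0)) hv.2)
    have hD : (3 * (v : ZMod p) ^ 2) ≠ 0 := by
      have h3 : (3 : ZMod p) ≠ 0 := by
        intro h
        apply hp3
        have h3' : ((3 : ℤ) : ZMod p) = 0 := by exact_mod_cast h
        exact_mod_cast (ZMod.intCast_zmod_eq_zero_iff_dvd 3 p).mp h3'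
      have hv0 : ((v : ZMod p)) ≠ 0 := by
        intro h
        apply hpv
        exact_mod_cast (ZMod.natCast_eq_zero_iff v p).mp h
      exact mul_ne_zero h3 (pow_ne_zero _ hv0)
    set τ : ZMod p := (-(s : ZMod p)) * (3 * (v : ZMod p) ^ 2)⁻¹ with hτ
    set t : ℕ := τ.val with htdef
    have htlt : t < p := ZMod.val_lt τ
    refine ⟨v + p ^ (j + 1) * t, ?_, ?_⟩
    · simp only [mem_filter, mem_range]
      constructor
      · calc v + p ^ (j + 1) * t < p ^ (j + 1) + p ^ (j + 1) * t := by omega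
          _ = p ^ (j + 1) * (t + 1) := by ring
          _ ≤ p ^ (j + 1) * p := Nat.mul_le_mul_left _ (by omega)
          _ = p ^ (j + 2) := by rw [← pow_succ]
      · have hcast : ((t : ℕ) : ZMod p) = τ := ZMod.natCast_rightInverse τ
        have hw0 : ((s + 3 * (v : ℤ) ^ 2 * t : ℤ) : ZMod p) = 0 := by
          push_cast
          rw [hcast, hτ]
          linear_combination (-(s : ZMod p)) * mul_inv_cancel₀ hD
        obtain ⟨w, hw⟩ := (ZMod.intCast_zmod_eq_zero_iff_dvd _ p).mp hw0
        refine ⟨w + (p : ℤ) ^ j * (3 * (v : ℤ) * (t : ℤ) ^ 2) + (p : ℤ) ^ (2 * j + 1) * (t : ℤ) ^ 3, ?_⟩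
        push_cast
        linear_combination hs + (p : ℤ) ^ (j + 1) * hw
    · rw [Nat.add_mul_mod_self_left]
      exact Nat.mod_eq_of_lt hv.1

lemma hensel_base (p : ℕ) (hp : p.Prime) (q : ℤ) :
    ((range p).filter (fun u : ℕ => (p : ℤ) ∣ ((u : ℤ) ^ 3 + q))).card =
      Nat.card {x : ZMod p // x ^ 3 = -(q : ZMod p)} := by
  haveI : NeZero p := ⟨hp.pos.ne'⟩
  rw [← card_nat_subtype p (fun u : ℕ => (p : ℤ) ∣ ((u : ℤ) ^ 3 + q))]
  have hiff : ∀ u : ℕ, (u < p ∧ (p : ℤ) ∣ ((u : ℤ) ^ 3 + q)) ↔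
      (u < p ∧ ((u : ZMod p)) ^ 3 = -(q : ZMod p)) := by
    intro u
    apply and_congr_right
    intro _
    rw [← ZMod.intCast_zmod_eq_zero_iff_dvd]
    push_cast
    constructor
    · intro h; linear_combination h
    · intro h; linear_combination h
  exact Nat.card_congr ((Equiv.subtypeEquivRight hiff).trans
    (natZModEquiv p (fun y => y ^ 3 = -(q : ZMod p))))

lemma hensel_count (p : ℕ) (hp : p.Prime) (q : ℤ) (hq : ¬ (p : ℤ) ∣ q) (hp3 : ¬ (p : ℤ) ∣ 3)
    (k : ℕ) (hk : 1 ≤ k) :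
    ((range (p ^ k)).filter (fun u : ℕ => (p : ℤ) ^ k ∣ ((u : ℤ) ^ 3 + q))).card =
      Nat.card {x : ZMod p // x ^ 3 = -(q : ZMod p)} := by
  induction k, hk using Nat.le_induction with
  | base => simpa using hensel_base p hp q
  | succ k hk ih => rw [hensel_step p hp q hq hp3 k hk, ih]

end Hensel
/-- Let `p` be a prime with `p ∤ 6` and `q` an integer with `p ∤ q`. Fix `r ≥ 1`, `β ≥ 0`
with `3β < r`. The number of solutions `(u, a, b)`, with `u` a unit modulo `p^(r-2β)` and
`(a, b)` residues modulo `p^(2r)`, of the system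
`a + 3u ≡ 0 (mod p^β)`, `3u² + 2au + b ≡ 0 (mod p^(r-β))`,
`u³ + au² + bu + q ≡ 0 (mod p^(2r-3β))`
is `(p-1)p^(2r-1)` if `β = 0` and `n_p(q)·p^(2r+β)` if `β ≥ 1`, where
`n_p(q) = #{x ∈ F_p : x³ = -q}`. -/
theorem stmt13 (p : ℕ) [Fact p.Prime] (hp6 : ¬ p ∣ 6) (q : ℤ) (hq : ¬ (p : ℤ) ∣ q)
    (r β : ℕ) (hr : 1 ≤ r) (hβ : 3 * β < r) :
    Nat.card {x : ℕ × ℕ × ℕ //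
        x.1 < p ^ (r - 2 * β) ∧ ¬ p ∣ x.1 ∧ x.2.1 < p ^ (2 * r) ∧ x.2.2 < p ^ (2 * r) ∧
        (p : ℤ) ^ β ∣ ((x.2.1 : ℤ) + 3 * (x.1 : ℤ)) ∧
        (p : ℤ) ^ (r - β) ∣ (3 * (x.1 : ℤ) ^ 2 + 2 * (x.2.1 : ℤ) * (x.1 : ℤ) + (x.2.2 : ℤ)) ∧
        (p : ℤ) ^ (2 * r - 3 * β) ∣
          ((x.1 : ℤ) ^ 3 + (x.2.1 : ℤ) * (x.1 : ℤ) ^ 2 + (x.2.2 : ℤ) * (x.1 : ℤ) + q)} =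
      if β = 0 then (p - 1) * p ^ (2 * r - 1)
      else Nat.card {x : ZMod p // x ^ 3 = -(q : ZMod p)} * p ^ (2 * r + β) := by
  classical
  have hp : p.Prime := Fact.out
  haveI : NeZero p := ⟨hp.pos.ne'⟩
  have hp3 : ¬ (p : ℤ) ∣ 3 := by
    intro h
    exact hp6 (by exact_mod_cast h.trans (by norm_num : (3 : ℤ) ∣ 6))
  set M := p ^ (r - 2 * β) with hM
  set N := p ^ (2 * r) with hN
  haveI : NeZero N := ⟨pow_ne_zero _ hp.pos.ne'⟩
  have hd1 : p ^ β ∣ N := pow_dvd_pow p (by omega)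
  have hd2 : p ^ (r - β) ∣ N := pow_dvd_pow p (by omega)
  have hd3 : p ^ (2 * r - 3 * β) ∣ N := pow_dvd_pow p (by omega)
  have hd21 : p ^ β ∣ p ^ (r - β) := pow_dvd_pow p (by omega)
  have hd31 : p ^ β ∣ p ^ (2 * r - 3 * β) := pow_dvd_pow p (by omega)
  have hd32 : p ^ (r - β) ∣ p ^ (2 * r - 3 * β) := pow_dvd_pow p (by omega)
  set φ1 : ZMod N →+* ZMod (p ^ β) := ZMod.castHom hd1 _ with hφ1
  set φ2 : ZMod N →+* ZMod (p ^ (r - β)) := ZMod.castHom hd2 _ with hφ2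
  set φ3 : ZMod N →+* ZMod (p ^ (2 * r - 3 * β)) := ZMod.castHom hd3 _ with hφ3
  set ψ21 : ZMod (p ^ (r - β)) →+* ZMod (p ^ β) := ZMod.castHom hd21 _ with hψ21
  set ψ32 : ZMod (p ^ (2 * r - 3 * β)) →+* ZMod (p ^ (r - β)) := ZMod.castHom hd32 _ with hψ32
  have hc21 : ∀ x : ZMod N, ψ21 (φ2 x) = φ1 x := fun x => by
    rw [hψ21, hφ2, hφ1, ← RingHom.comp_apply, ZMod.castHom_comp]
  have hc32 : ∀ x : ZMod N, ψ32 (φ3 x) = φ2 x := fun x => by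
    rw [hψ32, hφ3, hφ2, ← RingHom.comp_apply, ZMod.castHom_comp]
  set C3 : ℕ → ZMod N → ZMod N → Prop := fun u A B =>
    φ1 A + 3 * ((u : ℕ) : ZMod (p ^ β)) = 0 ∧
    3 * ((u : ℕ) : ZMod (p ^ (r - β))) ^ 2 + 2 * ((u : ℕ) : ZMod (p ^ (r - β))) * φ2 A
      + φ2 B = 0 ∧
    ((u : ℕ) : ZMod (p ^ (2 * r - 3 * β))) ^ 3
      + φ3 A * ((u : ℕ) : ZMod (p ^ (2 * r - 3 * β))) ^ 2
      + φ3 B * ((u : ℕ) : ZMod (p ^ (2 * r - 3 * β)))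
      + (q : ZMod (p ^ (2 * r - 3 * β))) = 0 with hC3
  have cond_iff : ∀ u a b : ℕ,
      ((p : ℤ) ^ β ∣ ((a : ℤ) + 3 * (u : ℤ)) ∧
       (p : ℤ) ^ (r - β) ∣ (3 * (u : ℤ) ^ 2 + 2 * (a : ℤ) * (u : ℤ) + (b : ℤ)) ∧
       (p : ℤ) ^ (2 * r - 3 * β) ∣
         ((u : ℤ) ^ 3 + (a : ℤ) * (u : ℤ) ^ 2 + (b : ℤ) * (u : ℤ) + q)) ↔
      C3 u (a : ZMod N) (b : ZMod N) := by
    intro u a b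
    rw [hC3]
    refine and_congr ?_ (and_congr ?_ ?_)
    · have h := ZMod.intCast_zmod_eq_zero_iff_dvd ((a : ℤ) + 3 * (u : ℤ)) (p ^ β)
      push_cast at h
      rw [← h, hφ1]
      constructor <;> intro h' <;> (try push_cast [map_natCast] at h' ⊢) <;> linear_combination h'
    · have h := ZMod.intCast_zmod_eq_zero_iff_dvd
        (3 * (u : ℤ) ^ 2 + 2 * (a : ℤ) * (u : ℤ) + (b : ℤ)) (p ^ (r - β))
      push_cast at h
      rw [← h, hφ2]
      constructor <;> intro h' <;> (try push_cast [map_natCast] at h' ⊢) <;> linear_combination h'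
    · have h := ZMod.intCast_zmod_eq_zero_iff_dvd
        ((u : ℤ) ^ 3 + (a : ℤ) * (u : ℤ) ^ 2 + (b : ℤ) * (u : ℤ) + q) (p ^ (2 * r - 3 * β))
      push_cast at h
      rw [← h, hφ3]
      constructor <;> intro h' <;> (try push_cast [map_natCast] at h' ⊢) <;> linear_combination h'
  have master : Nat.card {x : ℕ × ℕ × ℕ //
      x.1 < p ^ (r - 2 * β) ∧ ¬ p ∣ x.1 ∧ x.2.1 < p ^ (2 * r) ∧ x.2.2 < p ^ (2 * r) ∧
      (p : ℤ) ^ β ∣ ((x.2.1 : ℤ) + 3 * (x.1 : ℤ)) ∧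
      (p : ℤ) ^ (r - β) ∣ (3 * (x.1 : ℤ) ^ 2 + 2 * (x.2.1 : ℤ) * (x.1 : ℤ) + (x.2.2 : ℤ)) ∧
      (p : ℤ) ^ (2 * r - 3 * β) ∣
        ((x.1 : ℤ) ^ 3 + (x.2.1 : ℤ) * (x.1 : ℤ) ^ 2 + (x.2.2 : ℤ) * (x.1 : ℤ) + q)} =
      Nat.card {y : Fin M × ZMod N × ZMod N //
        (¬ p ∣ (y.1 : ℕ)) ∧ C3 (y.1 : ℕ) y.2.1 y.2.2} := by
    apply Nat.card_congr
    refine ⟨fun x => ⟨(⟨x.1.1, x.2.1⟩, ((x.1.2.1 : ℕ) : ZMod N), ((x.1.2.2 : ℕ) : ZMod N)),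
        x.2.2.1, (cond_iff _ _ _).mp
          ⟨x.2.2.2.2.2.1, x.2.2.2.2.2.2.1, x.2.2.2.2.2.2.2⟩⟩,
      fun y => ⟨((y.1.1 : ℕ), y.1.2.1.val, y.1.2.2.val), ?_⟩, ?_, ?_⟩
    · refine ⟨y.1.1.2, y.2.1, ZMod.val_lt _, ZMod.val_lt _, ?_⟩
      have hcond := (cond_iff (y.1.1 : ℕ) y.1.2.1.val y.1.2.2.val).mpr ?_
      · exact ⟨hcond.1, hcond.2.1, hcond.2.2⟩
      · rw [ZMod.natCast_rightInverse y.1.2.1, ZMod.natCast_rightInverse y.1.2.2]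
        exact y.2.2
    · intro x
      apply Subtype.ext
      obtain ⟨⟨u, a, b⟩, h⟩ := x
      simp only
      rw [ZMod.val_cast_of_lt h.2.2.1, ZMod.val_cast_of_lt h.2.2.2.1]
    · intro y
      apply Subtype.ext
      obtain ⟨⟨u, A, B⟩, h⟩ := y
      simp only [Prod.mk.injEq]
      exact ⟨trivial, ZMod.natCast_rightInverse A, ZMod.natCast_rightInverse B⟩
  rw [master]
  have step1 : Nat.card {y : Fin M × ZMod N × ZMod N //
      (¬ p ∣ (y.1 : ℕ)) ∧ C3 (y.1 : ℕ) y.2.1 y.2.2} =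
      ∑ u : Fin M, Nat.card {ab : ZMod N × ZMod N //
        (¬ p ∣ (u : ℕ)) ∧ C3 (u : ℕ) ab.1 ab.2} :=
    card_cond_prod (fun (u : Fin M) (ab : ZMod N × ZMod N) =>
      (¬ p ∣ (u : ℕ)) ∧ C3 (u : ℕ) ab.1 ab.2)
  have hK1 : N / p ^ (r - β) = p ^ (r + β) := by
    rw [hN, Nat.pow_div (by omega) hp.pos]; congr 1; omega
  have hK2 : N / p ^ (2 * r - 3 * β) = p ^ (3 * β) := by
    rw [hN, Nat.pow_div (by omega) hp.pos]; congr 1; omega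
  have fiber : ∀ u : Fin M,
      Nat.card {ab : ZMod N × ZMod N // (¬ p ∣ (u : ℕ)) ∧ C3 (u : ℕ) ab.1 ab.2} =
      if (¬ p ∣ (u : ℕ) ∧ ((u : ℕ) : ZMod (p ^ β)) ^ 3 + (q : ZMod (p ^ β)) = 0)
        then p ^ (r + β) * p ^ (3 * β) else 0 := by
    intro u
    by_cases hg : (¬ p ∣ (u : ℕ) ∧ ((u : ℕ) : ZMod (p ^ β)) ^ 3 + (q : ZMod (p ^ β)) = 0)
    · rw [if_pos hg]
      obtain ⟨hpu, hc0⟩ := hg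
      have hcop : Nat.Coprime (u : ℕ) p := ((Nat.Prime.coprime_iff_not_dvd hp).mpr hpu).symm
      have hu1 : IsUnit (((u : ℕ)) : ZMod (p ^ β)) :=
        (ZMod.isUnit_iff_coprime _ _).mpr (hcop.pow_right _)
      have hu2 : IsUnit (((u : ℕ)) : ZMod (p ^ (r - β))) :=
        (ZMod.isUnit_iff_coprime _ _).mpr (hcop.pow_right _)
      have hu3 : IsUnit (((u : ℕ)) : ZMod (p ^ (2 * r - 3 * β))) :=
        (ZMod.isUnit_iff_coprime _ _).mpr (hcop.pow_right _)
      set D1 : ZMod N → Prop := fun A =>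
        (((u : ℕ)) : ZMod (p ^ (r - β))) ^ 2 * φ2 A =
          (q : ZMod (p ^ (r - β))) - 2 * (((u : ℕ)) : ZMod (p ^ (r - β))) ^ 3 with hD1
      set D2 : ZMod N → ZMod N → Prop := fun A B =>
        (((u : ℕ)) : ZMod (p ^ (2 * r - 3 * β))) * φ3 B =
          -((((u : ℕ)) : ZMod (p ^ (2 * r - 3 * β))) ^ 3
            + φ3 A * (((u : ℕ)) : ZMod (p ^ (2 * r - 3 * β))) ^ 2
            + (q : ZMod (p ^ (2 * r - 3 * β)))) with hD2
      have hiff : ∀ ab : ZMod N × ZMod N,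
          ((¬ p ∣ (u : ℕ)) ∧ C3 (u : ℕ) ab.1 ab.2) ↔ (D1 ab.1 ∧ D2 ab.1 ab.2) := by
        rintro ⟨A, B⟩
        rw [hC3, hD1, hD2]
        simp only
        constructor
        · rintro ⟨-, h1, h2, h3⟩
          have e32 := congrArg ψ32 h3
          simp only [map_add, map_mul, map_pow, map_natCast, map_intCast, map_zero,
            map_ofNat, hc32] at e32
          constructor
          · linear_combination (((u : ℕ)) : ZMod (p ^ (r - β))) * h2 - e32
          · linear_combination h3
        · rintro ⟨f1, f2⟩
          have f2x := congrArg ψ32 f2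
          simp only [map_add, map_mul, map_pow, map_natCast, map_intCast, map_zero,
            map_neg, map_ofNat, hc32] at f2x
          have f1x := congrArg ψ21 f1
          simp only [map_add, map_mul, map_pow, map_natCast, map_intCast, map_zero,
            map_sub, map_neg, map_ofNat, hc21] at f1x
          refine ⟨hpu, ?_, ?_, ?_⟩
          · refine ((hu1.pow 2).mul_right_inj).mp ?_
            linear_combination f1x + hc0
          · refine (hu2.mul_right_inj).mp ?_
            linear_combination f1 + f2x
          · linear_combination f2
      rw [Nat.card_congr (Equiv.subtypeEquivRight hiff)]
      have hinner : ∀ A : ZMod N,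
          Nat.card {B : ZMod N // D1 A ∧ D2 A B} = if D1 A then p ^ (3 * β) else 0 := by
        intro A
        by_cases hA : D1 A
        · rw [if_pos hA, Nat.card_congr (Equiv.subtypeEquivRight
            (fun B => and_iff_right hA))]
          simp only [hD2, hφ3]
          rw [card_fiber_unit hd3 hu3, hK2]
        · rw [if_neg hA]
          haveI : IsEmpty {B : ZMod N // D1 A ∧ D2 A B} := ⟨fun B => hA B.2.1⟩
          exact Nat.card_of_isEmpty
      rw [card_cond_prod_eval (fun A B => D1 A ∧ D2 A B) D1 (p ^ (3 * β)) hinner]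
      congr 1
      simp only [hD1, hφ2]
      rw [card_fiber_unit hd2 (hu2.pow 2), hK1]
    · rw [if_neg hg]
      haveI : IsEmpty {ab : ZMod N × ZMod N //
          (¬ p ∣ (u : ℕ)) ∧ C3 (u : ℕ) ab.1 ab.2} := by
        constructor
        rintro ⟨⟨A, B⟩, hpu, hcc⟩
        rw [hC3] at hcc
        simp only at hcc
        obtain ⟨h1, h2, h3⟩ := hcc
        apply hg
        refine ⟨hpu, ?_⟩
        have e32 := congrArg ψ32 h3
        simp only [map_add, map_mul, map_pow, map_natCast, map_intCast, map_zero,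
          map_ofNat, hc32] at e32
        have e21 := congrArg ψ21 h2
        simp only [map_add, map_mul, map_pow, map_natCast, map_intCast, map_zero,
          map_ofNat, hc21] at e21
        have e31 := congrArg ψ21 e32
        simp only [map_add, map_mul, map_pow, map_natCast, map_intCast, map_zero,
          map_ofNat, hc21] at e31
        linear_combination e31 - (((u : ℕ)) : ZMod (p ^ β)) * e21
          + (((u : ℕ)) : ZMod (p ^ β)) ^ 2 * h1
      exact Nat.card_of_isEmpty
  rw [step1, Finset.sum_congr rfl (fun u _ => fiber u), sum_ite_card]
  have zmod_iff : ∀ u : ℕ, (((u : ZMod (p ^ β))) ^ 3 + (q : ZMod (p ^ β)) = 0) ↔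
      (p : ℤ) ^ β ∣ ((u : ℤ) ^ 3 + q) := by
    intro u
    have h := ZMod.intCast_zmod_eq_zero_iff_dvd ((u : ℤ) ^ 3 + q) (p ^ β)
    push_cast at h
    exact h
  have conv1 : Nat.card {u : Fin M // ¬ p ∣ (u : ℕ) ∧
      ((u : ℕ) : ZMod (p ^ β)) ^ 3 + (q : ZMod (p ^ β)) = 0} =
      ((range M).filter (fun u : ℕ => ¬ p ∣ u ∧ (p : ℤ) ^ β ∣ ((u : ℤ) ^ 3 + q))).card := by
    rw [← card_nat_subtype M (fun u : ℕ => ¬ p ∣ u ∧ (p : ℤ) ^ β ∣ ((u : ℤ) ^ 3 + q))]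
    exact Nat.card_congr
      ⟨fun x => ⟨x.1.1, x.1.2, x.2.1, (zmod_iff _).mp x.2.2⟩,
       fun x => ⟨⟨x.1, x.2.1⟩, x.2.2.1, (zmod_iff _).mpr x.2.2.2⟩,
       fun x => by ext <;> rfl, fun x => rfl⟩
  rw [conv1]
  by_cases hβ0 : β = 0
  · subst hβ0
    rw [if_pos rfl]
    have hpredeq : ((range M).filter
        (fun u : ℕ => ¬ p ∣ u ∧ (p : ℤ) ^ 0 ∣ ((u : ℤ) ^ 3 + q))) =
        ((range M).filter (fun u : ℕ => ¬ p ∣ u)) := by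
      apply Finset.filter_congr
      intro x _
      simp
    rw [hpredeq]
    have hMr : M = p ^ r := by rw [hM]; norm_num
    have hsplit : ((range M).filter (fun u : ℕ => ¬ p ∣ u)).card
        = p ^ r - p ^ (r - 1) := by
      have htot := Finset.card_filter_add_card_filter_not
        (s := range M) (p := fun u : ℕ => p ∣ u)
      have hmult : ((range M).filter (fun u : ℕ => p ∣ u)).card = p ^ (r - 1) := by
        have hM' : M = p ^ (r - 1) * p := by rw [hMr, ← pow_succ]; congr 1; omega
        rw [hM', periodic_filter_card p (fun u : ℕ => p ∣ u)
          (fun x => Nat.dvd_add_self_right) (p ^ (r - 1))]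
        have hone : ((range p).filter (fun u : ℕ => p ∣ u)) = {0} := by
          ext x
          simp only [mem_filter, mem_range, Finset.mem_singleton]
          constructor
          · rintro ⟨hlt, hdvd⟩
            exact Nat.eq_zero_of_dvd_of_lt hdvd hlt
          · rintro rfl
            exact ⟨hp.pos, dvd_zero p⟩
        rw [hone, Finset.card_singleton, mul_one]
      rw [hmult, Finset.card_range] at htot
      rw [show p ^ r = M from hMr.symm]
      omega
    rw [hsplit]
    have e1 : p ^ r - p ^ (r - 1) = (p - 1) * p ^ (r - 1) := by
      rw [Nat.sub_mul, one_mul]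
      congr 1
      rw [← pow_succ']
      congr 1
      omega
    rw [e1]
    have e2 : p ^ (r - 1) * (p ^ (r + 0) * p ^ (3 * 0)) = p ^ (2 * r - 1) := by
      rw [← pow_add, ← pow_add]
      congr 1
      omega
    rw [mul_assoc, e2]
  · rw [if_neg hβ0]
    have hdrop : ((range M).filter
        (fun u : ℕ => ¬ p ∣ u ∧ (p : ℤ) ^ β ∣ ((u : ℤ) ^ 3 + q))) =
        ((range M).filter (fun u : ℕ => (p : ℤ) ^ β ∣ ((u : ℤ) ^ 3 + q))) := by
      apply Finset.filter_congr
      intro x _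
      constructor
      · exact fun h => h.2
      · intro h
        refine ⟨?_, h⟩
        intro hdvd
        have h1 : (p : ℤ) ∣ ((x : ℤ) ^ 3 + q) :=
          dvd_trans (dvd_pow_self (p : ℤ) hβ0) h
        exact not_dvd_of_root hp hq h1 (Int.natCast_dvd_natCast.mpr hdvd)
    rw [hdrop]
    have hper : ∀ x : ℕ, ((p : ℤ) ^ β ∣ ((↑(x + p ^ β) : ℤ) ^ 3 + q)) ↔
        ((p : ℤ) ^ β ∣ ((x : ℤ) ^ 3 + q)) := by
      intro x
      have hmod : ((x + p ^ β : ℕ) : ℤ) ≡ (x : ℤ) [ZMOD (p : ℤ) ^ β] := by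
        have hcast : ((x + p ^ β : ℕ) : ℤ) = (x : ℤ) + (p : ℤ) ^ β := by push_cast; ring
        rw [hcast]
        simpa using (Int.ModEq.add_left (x : ℤ) (Int.modEq_zero_iff_dvd.mpr dvd_rfl))
      have hc := (hmod.pow 3).add_right q
      constructor
      · intro h
        exact (Int.modEq_zero_iff_dvd).mp (hc.symm.trans ((Int.modEq_zero_iff_dvd).mpr h))
      · intro h
        exact (Int.modEq_zero_iff_dvd).mp (hc.trans ((Int.modEq_zero_iff_dvd).mpr h))
    have hMsplit : M = p ^ (r - 3 * β) * p ^ β := by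
      rw [hM, ← pow_add]; congr 1; omega
    rw [hMsplit, periodic_filter_card (p ^ β)
      (fun u : ℕ => (p : ℤ) ^ β ∣ ((u : ℤ) ^ 3 + q)) hper (p ^ (r - 3 * β)),
      hensel_count p hp q hq hp3 β (by omega)]
    have e3 : p ^ (r - 3 * β) * (p ^ (r + β) * p ^ (3 * β)) = p ^ (2 * r + β) := by
      rw [← pow_add, ← pow_add]
      congr 1
      omega
    rw [mul_comm (p ^ (r - 3 * β)), mul_assoc, e3]
end

section
/- Assume q is odd. Fix integers r ≥ 3β ≥ 0 with r > 0. The number of solutions (u, a, b) with u ∈ (Z/2^{r-2β}Z)^× and (a, b) ∈ (Z/2^{2r}Z)² to the system {3u + a ≡ 0 mod 2^β, 3u² + 2au + b ≡ 0 mod 2^{r-β}, u³ + au² + bu + q ≡ 0 mod 2^{2r-3β}} equals 2^{2r-1} if β = 0 and 2^{2r+β} if β ≥ 1; in particular the count is independent of q. -/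
lemma countL1 (m k c : ℕ) (hc : c < m) :
    ((Finset.range (m * k)).filter (fun n => n % m = c)).card = k := by
  have hm : 0 < m := Nat.pos_of_ne_zero (by omega)
  conv_rhs => rw [← Finset.card_range k]
  apply Finset.card_bij (fun n _ => n / m)
  · intro n hn
    simp only [Finset.mem_filter, Finset.mem_range] at hn ⊢
    exact Nat.div_lt_of_lt_mul hn.1
  · intro a ha b hb hab
    simp only [Finset.mem_filter, Finset.mem_range] at ha hb
    rw [← Nat.div_add_mod a m, ← Nat.div_add_mod b m, hab, ha.2, hb.2]
  · intro j hj
    simp only [Finset.mem_range] at hj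
    refine ⟨m * j + c, ?_, ?_⟩
    · simp only [Finset.mem_filter, Finset.mem_range]
      refine ⟨?_, ?_⟩
      · have h1 : m * j + c < m * (j + 1) := by
          rw [Nat.mul_add, Nat.mul_one]; exact Nat.add_lt_add_left hc _
        exact lt_of_lt_of_le h1 (Nat.mul_le_mul_left m hj)
      · rw [Nat.mul_add_mod]; exact Nat.mod_eq_of_lt hc
    · rw [Nat.mul_add_div hm, Nat.div_eq_of_lt hc, Nat.add_zero]


lemma countL0 (e k : ℕ) (x : ZMod (2 ^ e)) :
    ((Finset.range (2 ^ e * k)).filter (fun n : ℕ => (n : ZMod (2 ^ e)) = x)).card = k := by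
  haveI : NeZero (2 ^ e) := ⟨pow_ne_zero e two_ne_zero⟩
  have hiff : ∀ n : ℕ, ((n : ZMod (2 ^ e)) = x ↔ n % 2 ^ e = x.val) := by
    intro n
    constructor
    · intro h; rw [← h, ZMod.val_natCast]
    · intro h
      have h2 := congrArg (fun c : ℕ => (c : ZMod (2 ^ e))) h
      simpa [Nat.cast_pow, ZMod.natCast_mod, ZMod.natCast_rightInverse x] using h2
  rw [Finset.filter_congr (fun n _ => by rw [hiff n])]
  exact countL1 _ _ _ (ZMod.val_lt x)

lemma countL2 (e k s : ℕ) (hs : Odd s) (t : ℤ) :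
    ((Finset.range (2 ^ e * k)).filter
      (fun n : ℕ => (2 : ℤ) ^ e ∣ (s : ℤ) * (n : ℤ) + t)).card = k := by
  haveI : NeZero (2 ^ e) := ⟨pow_ne_zero e two_ne_zero⟩
  have hu : IsUnit (s : ZMod (2 ^ e)) :=
    (ZMod.isUnit_iff_coprime s (2 ^ e)).mpr ((hs.coprime_two_right).pow_right e)
  obtain ⟨v, hv⟩ := hu
  have hinv : (↑v⁻¹ : ZMod (2 ^ e)) * (s : ZMod (2 ^ e)) = 1 := by
    rw [← hv]; exact v.inv_mul
  have hiff : ∀ n : ℕ, ((2 : ℤ) ^ e ∣ (s : ℤ) * (n : ℤ) + t ↔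
      (n : ZMod (2 ^ e)) = (↑v⁻¹ : ZMod (2 ^ e)) * (-(t : ZMod (2 ^ e)))) := by
    intro n
    have h0 : ((2 : ℤ) ^ e ∣ (s : ℤ) * (n : ℤ) + t) ↔
        (((s : ℤ) * (n : ℤ) + t : ℤ) : ZMod (2 ^ e)) = 0 := by
      rw [ZMod.intCast_zmod_eq_zero_iff_dvd]; push_cast; rfl
    rw [h0]
    push_cast
    constructor
    · intro h
      have h1 : (s : ZMod (2 ^ e)) * (n : ℕ) = -(t : ZMod (2 ^ e)) := by
        linear_combination h
      calc (n : ZMod (2 ^ e)) = ((↑v⁻¹ : ZMod (2 ^ e)) * (s : ZMod (2 ^ e))) * n := by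
            rw [hinv, one_mul]
        _ = _ := by rw [mul_assoc, h1]
    · intro h
      rw [h]
      have h2 : (s : ZMod (2 ^ e)) * ((↑v⁻¹ : ZMod (2 ^ e)) * (-(t : ZMod (2 ^ e))))
          = -(t : ZMod (2 ^ e)) := by
        rw [← mul_assoc, mul_comm ((s : ZMod (2 ^ e))) (↑v⁻¹ : ZMod (2 ^ e)), hinv, one_mul]
      rw [h2]; ring
  rw [Finset.filter_congr (fun n _ => by rw [hiff n])]
  exact countL0 _ _ _

lemma cubeRoot (q : ℤ) (hq : Odd q) (e : ℕ) :
    ∃ x : ZMod (2 ^ e), ∀ n : ℕ,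
      ((2 : ℤ) ^ e ∣ (n : ℤ) ^ 3 + q ↔ (n : ZMod (2 ^ e)) = x) := by
  haveI : NeZero (2 ^ e) := ⟨pow_ne_zero e two_ne_zero⟩
  have hqu : IsUnit ((q : ℤ) : ZMod (2 ^ e)) := by
    have h1 : IsUnit ((q.natAbs : ℕ) : ZMod (2 ^ e)) :=
      (ZMod.isUnit_iff_coprime _ _).mpr (((Int.natAbs_odd.mpr hq).coprime_two_right).pow_right e)
    rcases Int.natAbs_eq q with h | h
    · rw [h, Int.cast_natCast]; exact h1
    · rw [h, Int.cast_neg, Int.cast_natCast]; exact h1.neg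
  have hqn : IsUnit (-((q : ℤ) : ZMod (2 ^ e))) := hqu.neg
  have hcop : Nat.Coprime 3 (Fintype.card (ZMod (2 ^ e))ˣ) := by
    rw [ZMod.card_units_eq_totient]
    rcases Nat.eq_zero_or_pos e with he | he
    · subst he; decide
    · rw [Nat.totient_prime_pow Nat.prime_two he]
      exact Nat.Coprime.mul_right (Nat.Coprime.pow_right _ (by decide)) (by decide)
  have hinj : Function.Injective (fun g : (ZMod (2 ^ e))ˣ => g ^ 3) := by
    intro a b hab
    have hab' : a ^ 3 = b ^ 3 := hab
    have h1 : (a * b⁻¹) ^ 3 = 1 := by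
      rw [mul_pow, hab', inv_pow, mul_inv_cancel]
    have h2 : orderOf (a * b⁻¹) ∣ 3 := orderOf_dvd_of_pow_eq_one h1
    have h3 : orderOf (a * b⁻¹) ∣ Fintype.card (ZMod (2 ^ e))ˣ := orderOf_dvd_card
    have h4 := Nat.dvd_gcd h2 h3
    rw [Nat.Coprime] at hcop
    rw [hcop] at h4
    have h5 : a * b⁻¹ = 1 := orderOf_eq_one_iff.mp (Nat.dvd_one.mp h4)
    exact mul_inv_eq_one.mp h5
  obtain ⟨g, hg⟩ := (Finite.injective_iff_surjective.mp hinj) hqn.unit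
  refine ⟨↑g, fun n => ?_⟩
  have h0 : ((2 : ℤ) ^ e ∣ (n : ℤ) ^ 3 + q) ↔
      ((((n : ℤ) ^ 3 + q : ℤ)) : ZMod (2 ^ e)) = 0 := by
    rw [ZMod.intCast_zmod_eq_zero_iff_dvd]; push_cast; rfl
  rw [h0]
  push_cast
  have hgval : ((g : ZMod (2 ^ e))) ^ 3 = -((q : ℤ) : ZMod (2 ^ e)) := by
    have hg' : g ^ 3 = hqn.unit := hg
    rw [← Units.val_pow_eq_pow_val, hg', IsUnit.unit_spec]
  constructor
  · intro h
    have hcube : (n : ZMod (2 ^ e)) ^ 3 = -((q : ℤ) : ZMod (2 ^ e)) := by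
      linear_combination h
    have hun : IsUnit ((n : ZMod (2 ^ e))) := by
      have h6 : IsUnit ((n : ZMod (2 ^ e)) ^ 3) := by rw [hcube]; exact hqn
      exact (isUnit_pow_iff (by norm_num)).mp h6
    obtain ⟨w, hw⟩ := hun
    have h7 : w ^ 3 = g ^ 3 := by
      apply Units.ext
      rw [Units.val_pow_eq_pow_val, Units.val_pow_eq_pow_val, hw, hcube, hgval]
    have h8 : w = g := hinj h7
    rw [← hw, h8]
  · intro h
    rw [h]
    linear_combination hgval

lemma oddCop {u : ℤ} (hu : Odd u) (e : ℕ) : IsCoprime ((2:ℤ)^e) u := by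
  have h2u : IsCoprime (2:ℤ) u := by
    rw [Int.isCoprime_iff_gcd_eq_one]
    have := Nat.coprime_two_left.mpr (Int.natAbs_odd.mpr hu)
    simpa [Int.gcd] using this
  exact h2u.pow_left

lemma key1 (u a b t : ℤ) (e E : ℕ) (heE : e ≤ E) (hu : Odd u)
    (h3 : (2:ℤ)^E ∣ u^3 + a*u^2 + b*u + t) :
    ((2:ℤ)^e ∣ 3*u^2 + 2*a*u + b ↔ (2:ℤ)^e ∣ u^2*a + (2*u^3 - t)) := by
  have hd : (2:ℤ)^e ∣ u^3 + a*u^2 + b*u + t := dvd_trans (pow_dvd_pow 2 heE) h3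
  have hco := oddCop hu e
  constructor
  · intro h
    have h1 : (2:ℤ)^e ∣ u*(3*u^2+2*a*u+b) := Dvd.dvd.mul_left h u
    have heq : u^2*a + (2*u^3 - t) = u*(3*u^2+2*a*u+b) - (u^3+a*u^2+b*u+t) := by ring
    rw [heq]; exact dvd_sub h1 hd
  · intro h
    have h1 : (2:ℤ)^e ∣ u*(3*u^2+2*a*u+b) := by
      have heq : u*(3*u^2+2*a*u+b) = (u^2*a + (2*u^3-t)) + (u^3+a*u^2+b*u+t) := by ring
      rw [heq]; exact dvd_add h hd
    exact hco.dvd_of_dvd_mul_left h1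

lemma key2 (u a t : ℤ) (e E : ℕ) (heE : e ≤ E) (hu : Odd u)
    (h2 : (2:ℤ)^E ∣ u^2*a + (2*u^3 - t)) :
    ((2:ℤ)^e ∣ 3*u + a ↔ (2:ℤ)^e ∣ u^3 + t) := by
  have hd : (2:ℤ)^e ∣ u^2*a + (2*u^3 - t) := dvd_trans (pow_dvd_pow 2 heE) h2
  have hco := oddCop hu e
  constructor
  · intro h
    have h1 : (2:ℤ)^e ∣ u^2*(3*u+a) := Dvd.dvd.mul_left h (u^2)
    have heq : u^3 + t = u^2*(3*u+a) - (u^2*a + (2*u^3 - t)) := by ring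
    rw [heq]; exact dvd_sub h1 hd
  · intro h
    have h1 : (2:ℤ)^e ∣ u^2*(3*u+a) := by
      have heq : u^2*(3*u+a) = (u^3+t) + (u^2*a + (2*u^3-t)) := by ring
      rw [heq]; exact dvd_add h hd
    have h2' : (2:ℤ)^e ∣ u*(u*(3*u+a)) := by
      have : u^2*(3*u+a) = u*(u*(3*u+a)) := by ring
      rwa [this] at h1
    exact hco.dvd_of_dvd_mul_left (hco.dvd_of_dvd_mul_left h2')
/-- Let `q` be odd and fix `r ≥ 3β ≥ 0` with `r > 0`. The number of solutions `(u, a, b)`,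
with `u` a unit modulo `2^(r-2β)` and `(a, b)` residues modulo `2^(2r)`, of the system
`3u + a ≡ 0 (mod 2^β)`, `3u² + 2au + b ≡ 0 (mod 2^(r-β))`,
`u³ + au² + bu + q ≡ 0 (mod 2^(2r-3β))` equals `2^(2r-1)` if `β = 0` and `2^(2r+β)` if
`β ≥ 1`; in particular, it is independent of `q`. -/
theorem stmt16 (q : ℤ) (hq : Odd q) (r β : ℕ) (hr : 0 < r) (hβ : 3 * β ≤ r) :
    Nat.card {x : ℕ × ℕ × ℕ //
        x.1 < 2 ^ (r - 2 * β) ∧ ¬ 2 ∣ x.1 ∧ x.2.1 < 2 ^ (2 * r) ∧ x.2.2 < 2 ^ (2 * r) ∧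
        (2 : ℤ) ^ β ∣ (3 * (x.1 : ℤ) + (x.2.1 : ℤ)) ∧
        (2 : ℤ) ^ (r - β) ∣ (3 * (x.1 : ℤ) ^ 2 + 2 * (x.2.1 : ℤ) * (x.1 : ℤ) + (x.2.2 : ℤ)) ∧
        (2 : ℤ) ^ (2 * r - 3 * β) ∣
          ((x.1 : ℤ) ^ 3 + (x.2.1 : ℤ) * (x.1 : ℤ) ^ 2 + (x.2.2 : ℤ) * (x.1 : ℤ) + q)} =
      if β = 0 then 2 ^ (2 * r - 1) else 2 ^ (2 * r + β) := by
  classical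
  set P : ℕ × ℕ × ℕ → Prop := fun x =>
    ¬ 2 ∣ x.1 ∧
    (2 : ℤ) ^ β ∣ (3 * (x.1 : ℤ) + (x.2.1 : ℤ)) ∧
    (2 : ℤ) ^ (r - β) ∣ (3 * (x.1 : ℤ) ^ 2 + 2 * (x.2.1 : ℤ) * (x.1 : ℤ) + (x.2.2 : ℤ)) ∧
    (2 : ℤ) ^ (2 * r - 3 * β) ∣
      ((x.1 : ℤ) ^ 3 + (x.2.1 : ℤ) * (x.1 : ℤ) ^ 2 + (x.2.2 : ℤ) * (x.1 : ℤ) + q) with hPdef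
  have hstep0 : Nat.card {x : ℕ × ℕ × ℕ //
        x.1 < 2 ^ (r - 2 * β) ∧ ¬ 2 ∣ x.1 ∧ x.2.1 < 2 ^ (2 * r) ∧ x.2.2 < 2 ^ (2 * r) ∧
        (2 : ℤ) ^ β ∣ (3 * (x.1 : ℤ) + (x.2.1 : ℤ)) ∧
        (2 : ℤ) ^ (r - β) ∣ (3 * (x.1 : ℤ) ^ 2 + 2 * (x.2.1 : ℤ) * (x.1 : ℤ) + (x.2.2 : ℤ)) ∧
        (2 : ℤ) ^ (2 * r - 3 * β) ∣
          ((x.1 : ℤ) ^ 3 + (x.2.1 : ℤ) * (x.1 : ℤ) ^ 2 + (x.2.2 : ℤ) * (x.1 : ℤ) + q)} =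
      ((Finset.range (2 ^ (r - 2 * β)) ×ˢ
          Finset.range (2 ^ (2 * r)) ×ˢ Finset.range (2 ^ (2 * r))).filter P).card := by
    rw [← Nat.card_eq_finsetCard]
    apply Nat.card_congr
    apply Equiv.subtypeEquivRight
    intro x
    simp only [Finset.mem_filter, Finset.mem_product, Finset.mem_range, hPdef]
    tauto
  rw [hstep0, Finset.card_filter]
  simp only [Finset.sum_product]
  -- auxiliary predicates
  have hodd_int : ∀ u : ℕ, ¬ 2 ∣ u → Odd ((u : ℕ) : ℤ) := by
    intro u hu
    exact Int.odd_coe_nat u |>.mpr (Nat.odd_iff.mpr (by omega))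
  -- innermost sum over b
  have hstep_b : ∀ u a : ℕ,
      (∑ b ∈ Finset.range (2 ^ (2 * r)), if P (u, a, b) then 1 else 0) =
      if (¬ 2 ∣ u ∧ (2 : ℤ) ^ β ∣ (3 * (u : ℤ) + (a : ℤ)) ∧
          (2 : ℤ) ^ (r - β) ∣ ((u : ℤ) ^ 2 * (a : ℤ) + (2 * (u : ℤ) ^ 3 - q)))
        then 2 ^ (3 * β) else 0 := by
    intro u a
    by_cases hA : (¬ 2 ∣ u ∧ (2 : ℤ) ^ β ∣ (3 * (u : ℤ) + (a : ℤ)) ∧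
        (2 : ℤ) ^ (r - β) ∣ ((u : ℤ) ^ 2 * (a : ℤ) + (2 * (u : ℤ) ^ 3 - q)))
    · rw [if_pos hA]
      obtain ⟨hu, h1, h2'⟩ := hA
      have hodd := hodd_int u hu
      have hcongr : ∀ b : ℕ, (P (u, a, b) ↔
          (2 : ℤ) ^ (2 * r - 3 * β) ∣ ((u : ℤ) * (b : ℤ) +
            ((u : ℤ) ^ 3 + (a : ℤ) * (u : ℤ) ^ 2 + q))) := by
        intro b
        rw [hPdef]
        simp only []
        constructor
        · rintro ⟨-, -, -, h3⟩
          rw [show (u : ℤ) * (b : ℤ) + ((u : ℤ) ^ 3 + (a : ℤ) * (u : ℤ) ^ 2 + q)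
              = (u : ℤ) ^ 3 + (a : ℤ) * (u : ℤ) ^ 2 + (b : ℤ) * (u : ℤ) + q from by ring]
          exact h3
        · intro h3'
          have h3 : (2 : ℤ) ^ (2 * r - 3 * β) ∣
              ((u : ℤ) ^ 3 + (a : ℤ) * (u : ℤ) ^ 2 + (b : ℤ) * (u : ℤ) + q) := by
            rw [show (u : ℤ) ^ 3 + (a : ℤ) * (u : ℤ) ^ 2 + (b : ℤ) * (u : ℤ) + q
                = (u : ℤ) * (b : ℤ) + ((u : ℤ) ^ 3 + (a : ℤ) * (u : ℤ) ^ 2 + q) from by ring]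
            exact h3'
          refine ⟨hu, h1, ?_, h3⟩
          exact (key1 (u : ℤ) (a : ℤ) (b : ℤ) q (r - β) (2 * r - 3 * β)
            (by omega) hodd h3).mpr h2'
      have hsum : (∑ b ∈ Finset.range (2 ^ (2 * r)), if P (u, a, b) then 1 else 0)
          = ∑ b ∈ Finset.range (2 ^ (2 * r)),
              if (2 : ℤ) ^ (2 * r - 3 * β) ∣ ((u : ℤ) * (b : ℤ) +
                ((u : ℤ) ^ 3 + (a : ℤ) * (u : ℤ) ^ 2 + q)) then 1 else 0 :=
        Finset.sum_congr rfl (fun b _ => by simp only [hcongr b])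
      rw [hsum]
      rw [← Finset.card_filter]
      rw [show (2 : ℕ) ^ (2 * r) = 2 ^ (2 * r - 3 * β) * 2 ^ (3 * β) from by
        rw [← pow_add]; congr 1; omega]
      exact countL2 (2 * r - 3 * β) (2 ^ (3 * β)) u (Nat.odd_iff.mpr (by omega))
        ((u : ℤ) ^ 3 + (a : ℤ) * (u : ℤ) ^ 2 + q)
    · rw [if_neg hA]
      apply Finset.sum_eq_zero
      intro b _
      rw [if_neg]
      rw [hPdef]
      rintro ⟨hu, h1, h2, h3⟩
      have hodd := hodd_int u hu
      exact hA ⟨hu, h1, (key1 (u : ℤ) (a : ℤ) (b : ℤ) q (r - β) (2 * r - 3 * β)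
        (by omega) hodd h3).mp h2⟩
  -- sum over a
  have hstep_a : ∀ u : ℕ,
      (∑ a ∈ Finset.range (2 ^ (2 * r)),
        if (¬ 2 ∣ u ∧ (2 : ℤ) ^ β ∣ (3 * (u : ℤ) + (a : ℤ)) ∧
            (2 : ℤ) ^ (r - β) ∣ ((u : ℤ) ^ 2 * (a : ℤ) + (2 * (u : ℤ) ^ 3 - q)))
          then (2 ^ (3 * β) : ℕ) else 0) =
      if (¬ 2 ∣ u ∧ (2 : ℤ) ^ β ∣ ((u : ℤ) ^ 3 + q))
        then 2 ^ (r + β) * 2 ^ (3 * β) else 0 := by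
    intro u
    by_cases hB : (¬ 2 ∣ u ∧ (2 : ℤ) ^ β ∣ ((u : ℤ) ^ 3 + q))
    · rw [if_pos hB]
      obtain ⟨hu, hQ⟩ := hB
      have hodd := hodd_int u hu
      have hcongr : ∀ a : ℕ, ((¬ 2 ∣ u ∧ (2 : ℤ) ^ β ∣ (3 * (u : ℤ) + (a : ℤ)) ∧
          (2 : ℤ) ^ (r - β) ∣ ((u : ℤ) ^ 2 * (a : ℤ) + (2 * (u : ℤ) ^ 3 - q))) ↔
          (2 : ℤ) ^ (r - β) ∣ (((u ^ 2 : ℕ) : ℤ) * (a : ℤ) + (2 * (u : ℤ) ^ 3 - q))) := by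
        intro a
        constructor
        · rintro ⟨-, -, h2'⟩
          push_cast
          exact h2'
        · intro h2'
          have h2'c : (2 : ℤ) ^ (r - β) ∣ ((u : ℤ) ^ 2 * (a : ℤ) + (2 * (u : ℤ) ^ 3 - q)) := by
            push_cast at h2'
            exact h2'
          refine ⟨hu, ?_, h2'c⟩
          exact (key2 (u : ℤ) (a : ℤ) q β (r - β) (by omega) hodd h2'c).mpr hQ
      have hsum : (∑ a ∈ Finset.range (2 ^ (2 * r)),
            if (¬ 2 ∣ u ∧ (2 : ℤ) ^ β ∣ (3 * (u : ℤ) + (a : ℤ)) ∧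
              (2 : ℤ) ^ (r - β) ∣ ((u : ℤ) ^ 2 * (a : ℤ) + (2 * (u : ℤ) ^ 3 - q)))
              then (2 ^ (3 * β) : ℕ) else 0)
          = ∑ a ∈ Finset.range (2 ^ (2 * r)),
              if (2 : ℤ) ^ (r - β) ∣ (((u ^ 2 : ℕ) : ℤ) * (a : ℤ) + (2 * (u : ℤ) ^ 3 - q))
              then (2 ^ (3 * β) : ℕ) else 0 :=
        Finset.sum_congr rfl (fun a _ => by simp only [hcongr a])
      rw [hsum]
      rw [← Finset.sum_filter, Finset.sum_const, smul_eq_mul]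
      congr 1
      rw [show (2 : ℕ) ^ (2 * r) = 2 ^ (r - β) * 2 ^ (r + β) from by
        rw [← pow_add]; congr 1; omega]
      exact countL2 (r - β) (2 ^ (r + β)) (u ^ 2)
        ((Nat.odd_iff.mpr (by omega)).pow) (2 * (u : ℤ) ^ 3 - q)
    · rw [if_neg hB]
      apply Finset.sum_eq_zero
      intro a _
      rw [if_neg]
      rintro ⟨hu, h1, h2'⟩
      have hodd := hodd_int u hu
      exact hB ⟨hu, (key2 (u : ℤ) (a : ℤ) q β (r - β) (by omega) hodd h2').mp h1⟩
  rw [Finset.sum_congr rfl (fun u _ => by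
    rw [Finset.sum_congr rfl (fun a _ => hstep_b u a), hstep_a u])]
  rw [← Finset.sum_filter, Finset.sum_const, smul_eq_mul]
  -- now count the u's
  rcases Nat.eq_zero_or_pos β with hβ0 | hβ1
  · subst hβ0
    rw [if_pos rfl]
    have hcongr : ∀ u : ℕ, ((¬ 2 ∣ u ∧ (2 : ℤ) ^ 0 ∣ ((u : ℤ) ^ 3 + q)) ↔ u % 2 = 1) := by
      intro u
      simp only [pow_zero, one_dvd, and_true]
      omega
    have hfil : Finset.filter
          (fun u : ℕ => (¬ 2 ∣ u ∧ (2 : ℤ) ^ 0 ∣ ((u : ℤ) ^ 3 + q)))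
          (Finset.range (2 ^ (r - 2 * 0)))
        = Finset.filter (fun u : ℕ => u % 2 = 1) (Finset.range (2 ^ (r - 2 * 0))) :=
      Finset.filter_congr (fun u _ => by simp only [hcongr u])
    rw [hfil]
    rw [show (2 : ℕ) ^ (r - 2 * 0) = 2 * 2 ^ (r - 1) from by
      rw [show r - 2 * 0 = 1 + (r - 1) from by omega, pow_add, pow_one]]
    rw [countL1 2 (2 ^ (r - 1)) 1 (by norm_num)]
    rw [← pow_add, ← pow_add]
    congr 1
    omega
  · rw [if_neg (by omega)]
    obtain ⟨x, hx⟩ := cubeRoot q hq β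
    haveI : NeZero (2 ^ β) := ⟨pow_ne_zero β two_ne_zero⟩
    have hcongr : ∀ u : ℕ, ((¬ 2 ∣ u ∧ (2 : ℤ) ^ β ∣ ((u : ℤ) ^ 3 + q)) ↔
        u % 2 ^ β = x.val) := by
      intro u
      constructor
      · rintro ⟨-, hdvd⟩
        have heq : (u : ZMod (2 ^ β)) = x := (hx u).mp hdvd
        rw [← heq, ZMod.val_natCast]
      · intro h
        have h2 := congrArg (fun c : ℕ => (c : ZMod (2 ^ β))) h
        simp only [Nat.cast_pow, ZMod.natCast_mod, ZMod.natCast_rightInverse x] at h2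
        have hdvd : (2 : ℤ) ^ β ∣ ((u : ℤ) ^ 3 + q) := (hx u).mpr h2
        refine ⟨?_, hdvd⟩
        intro hdu
        have hcast : (2 : ℤ) ∣ (u : ℤ) := Int.natCast_dvd_natCast.mpr hdu
        have hu3 : (2 : ℤ) ∣ (u : ℤ) ^ 3 := dvd_pow hcast (by norm_num)
        have h2d : (2 : ℤ) ∣ ((u : ℤ) ^ 3 + q) :=
          dvd_trans (dvd_pow_self 2 (by omega)) hdvd
        have hq2 : (2 : ℤ) ∣ q := by
          have h5 := dvd_sub h2d hu3
          rwa [add_sub_cancel_left] at h5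
        rw [Int.odd_iff] at hq
        omega
    have hfil : Finset.filter
          (fun u : ℕ => (¬ 2 ∣ u ∧ (2 : ℤ) ^ β ∣ ((u : ℤ) ^ 3 + q)))
          (Finset.range (2 ^ (r - 2 * β)))
        = Finset.filter (fun u : ℕ => u % 2 ^ β = x.val) (Finset.range (2 ^ (r - 2 * β))) :=
      Finset.filter_congr (fun u _ => by simp only [hcongr u])
    rw [hfil]
    rw [show (2 : ℕ) ^ (r - 2 * β) = 2 ^ β * 2 ^ (r - 3 * β) from by
      rw [← pow_add]; congr 1; omega]
    rw [countL1 (2 ^ β) (2 ^ (r - 3 * β)) x.val (ZMod.val_lt x)]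
    rw [← pow_add, ← pow_add]
    congr 1
    omega
end
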